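/- Let P and Q be longest paths in a finite simple graph G, let x be a common vertex of P and Q, and suppose there is a path R internally disjoint from V(P) ∪ V(Q) connecting an internal point of a segment of P incident to x with an internal point of a segment of Q incident to x (the two segments sharing the endpoint x). Then there exist two paths in G whose lengths sum to 2·L(P) + 2·L(R), contradicting maximality; hence no such path R exists. -/

import Mathlib

open SimpleGraph

private lemma my_junction {V : Type} {G : SimpleGraph V} {a b c : V} {p : G.Walk a b}
    {q : G.Walk b c} (h : (p.append q).IsPath) :
    ∀ y ∈ p.support, y ∈ q.support → y = b := by
  intro y hyp hyq
  by_contra hne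
  have hnd := h.support_nodup
  rw [Walk.support_append, List.nodup_append] at hnd
  have hyt : y ∈ q.support.tail := by
    rw [q.support_eq_cons] at hyq
    rcases List.mem_cons.mp hyq with rfl | h'
    · exact absurd rfl hne
    · exact h'
  exact hnd.2.2 y hyp y hyt rfl

private lemma my_append {V : Type} {G : SimpleGraph V} {a b c : V} {p : G.Walk a b}
    {q : G.Walk b c} (hp : p.IsPath) (hq : q.IsPath)
    (h : ∀ y ∈ p.support, y ∈ q.support → y = b) : (p.append q).IsPath := by
  rw [Walk.isPath_def, Walk.support_append, List.nodup_append]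
  refine ⟨hp.support_nodup, ?_, ?_⟩
  · have hnd := hq.support_nodup
    rw [q.support_eq_cons] at hnd
    exact hnd.of_cons
  · intro y hyp y' hyt heq; subst heq
    have hyq : y ∈ q.support := by
      rw [q.support_eq_cons]; exact List.mem_cons_of_mem _ hyt
    have hb : y = b := h y hyp hyq
    subst hb
    have hnd := hq.support_nodup
    rw [q.support_eq_cons, List.nodup_cons] at hnd
    exact hnd.1 hyt

/-- `p` is a longest path in `G`: it is a path and no path in `G` is longer. -/
def IsLongestPath {V : Type} (G : SimpleGraph V) {u v : V} (p : G.Walk u v) : Prop :=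
  p.IsPath ∧ ∀ ⦃a b : V⦄ (q : G.Walk a b), q.IsPath → q.length ≤ p.length

/-- Let `P = p₁ + sP + p₂` and `Q = q₁ + sQ + q₂` be longest paths, where `sP` and
`sQ` are segments of `P` resp. `Q` incident to the common vertex `x` (their interior
vertices avoid the other path).  If `R` is a path from an internal point `rx` of `sP`
to an internal point `ry` of `sQ`, internally disjoint from `V(P) ∪ V(Q)`, then one
could build two paths whose lengths sum to `2·L(P) + 2·L(R)`, contradicting
maximality; hence no such path `R` exists. -/
theorem no_connection_between_adjacent_segments {V : Type} [Fintype V]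
    (G : SimpleGraph V) {u v c d x w z rx ry : V}
    (p1 : G.Walk u x) (sP : G.Walk x w) (p2 : G.Walk w v)
    (q1 : G.Walk c x) (sQ : G.Walk x z) (q2 : G.Walk z d)
    (hp : IsLongestPath G (p1.append (sP.append p2)))
    (hq : IsLongestPath G (q1.append (sQ.append q2)))
    (hsegP : ∀ y ∈ sP.support, y ∈ (q1.append (sQ.append q2)).support → y = x ∨ y = w)
    (hsegQ : ∀ y ∈ sQ.support, y ∈ (p1.append (sP.append p2)).support → y = x ∨ y = z)
    (hrx : rx ∈ sP.support) (hrxx : rx ≠ x) (hrxw : rx ≠ w)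
    (hry : ry ∈ sQ.support) (hryx : ry ≠ x) (hryz : ry ≠ z)
    (r : G.Walk rx ry) (hr : r.IsPath)
    (hint : ∀ y ∈ r.support, y ≠ rx → y ≠ ry →
      y ∉ (p1.append (sP.append p2)).support ∧ y ∉ (q1.append (sQ.append q2)).support) :
    False := by
  classical
  have hPpath := hp.1
  have hQpath := hq.1
  have hp1 : p1.IsPath := hPpath.of_append_left
  have hsPp2 : (sP.append p2).IsPath := hPpath.of_append_right
  have hsP : sP.IsPath := hsPp2.of_append_left
  have hp2 : p2.IsPath := hsPp2.of_append_right
  have hq1 : q1.IsPath := hQpath.of_append_left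
  have hsQq2 : (sQ.append q2).IsPath := hQpath.of_append_right
  have hsQ : sQ.IsPath := hsQq2.of_append_left
  have hq2 : q2.IsPath := hsQq2.of_append_right
  -- x ≠ w and x ≠ z
  have hxw : x ≠ w := by
    rintro rfl
    rw [Walk.isPath_iff_eq_nil.mp hsP] at hrx
    simp only [Walk.support_nil, List.mem_singleton] at hrx
    exact hrxx hrx
  have hxz : x ≠ z := by
    rintro rfl
    rw [Walk.isPath_iff_eq_nil.mp hsQ] at hry
    simp only [Walk.support_nil, List.mem_singleton] at hry
    exact hryx hry
  -- junction facts for P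
  have J1 : ∀ y ∈ p1.support, y ∈ (sP.append p2).support → y = x := my_junction hPpath
  have J2 : ∀ y ∈ sP.support, y ∈ p2.support → y = w := my_junction hsPp2
  have hx_p2 : x ∉ p2.support := fun h => hxw (J2 x sP.start_mem_support h)
  have hFP : ∀ y ∈ p1.support, y ∈ sP.support → y = x := fun y h1 h2 =>
    J1 y h1 ((Walk.mem_support_append_iff _ _).mpr (Or.inl h2))
  have hFP3 : ∀ y ∈ p1.support, y ∈ p2.support → False := by
    intro y h1 h2
    have hy : y = x := J1 y h1 ((Walk.mem_support_append_iff _ _).mpr (Or.inr h2))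
    subst hy
    exact hx_p2 h2
  -- junction facts for Q
  have K1 : ∀ y ∈ q1.support, y ∈ (sQ.append q2).support → y = x := my_junction hQpath
  have K2 : ∀ y ∈ sQ.support, y ∈ q2.support → y = z := my_junction hsQq2
  have hx_q2 : x ∉ q2.support := fun h => hxz (K2 x sQ.start_mem_support h)
  have hFQ : ∀ y ∈ q1.support, y ∈ sQ.support → y = x := fun y h1 h2 =>
    K1 y h1 ((Walk.mem_support_append_iff _ _).mpr (Or.inl h2))
  have hFQ3 : ∀ y ∈ q1.support, y ∈ q2.support → False := by
    intro y h1 h2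
    have hy : y = x := K1 y h1 ((Walk.mem_support_append_iff _ _).mpr (Or.inr h2))
    subst hy
    exact hx_q2 h2
  -- splitting sP at rx and sQ at ry
  have hs1 : (sP.takeUntil rx hrx).IsPath := hsP.takeUntil hrx
  have hs2 : (sP.dropUntil rx hrx).IsPath := hsP.dropUntil hrx
  have ht1 : (sQ.takeUntil ry hry).IsPath := hsQ.takeUntil hry
  have ht2 : (sQ.dropUntil ry hry).IsPath := hsQ.dropUntil hry
  have hsplitP : ((sP.takeUntil rx hrx).append (sP.dropUntil rx hrx)).IsPath := by
    rw [Walk.take_spec sP hrx]; exact hsP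
  have hsplitQ : ((sQ.takeUntil ry hry).append (sQ.dropUntil ry hry)).IsPath := by
    rw [Walk.take_spec sQ hry]; exact hsQ
  have JS : ∀ y ∈ (sP.takeUntil rx hrx).support, y ∈ (sP.dropUntil rx hrx).support → y = rx :=
    my_junction hsplitP
  have KS : ∀ y ∈ (sQ.takeUntil ry hry).support, y ∈ (sQ.dropUntil ry hry).support → y = ry :=
    my_junction hsplitQ
  have hx_s2 : x ∉ (sP.dropUntil rx hrx).support := fun h =>
    hrxx (JS x (Walk.start_mem_support _) h).symm
  have hw_s1 : w ∉ (sP.takeUntil rx hrx).support := fun h =>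
    hrxw (JS w h (Walk.end_mem_support _)).symm
  have hx_t2 : x ∉ (sQ.dropUntil ry hry).support := fun h =>
    hryx (KS x (Walk.start_mem_support _) h).symm
  have hz_t1 : z ∉ (sQ.takeUntil ry hry).support := fun h =>
    hryz (KS z h (Walk.end_mem_support _)).symm
  have hs1sub := Walk.support_takeUntil_subset sP hrx
  have hs2sub := Walk.support_dropUntil_subset sP hrx
  have ht1sub := Walk.support_takeUntil_subset sQ hry
  have ht2sub := Walk.support_dropUntil_subset sQ hry
  -- membership in P and Q
  have hmemP : ∀ y, y ∈ p1.support ∨ y ∈ sP.support ∨ y ∈ p2.support →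
      y ∈ (p1.append (sP.append p2)).support := by
    intro y hy
    rw [Walk.mem_support_append_iff, Walk.mem_support_append_iff]
    tauto
  have hmemQ : ∀ y, y ∈ q1.support ∨ y ∈ sQ.support ∨ y ∈ q2.support →
      y ∈ (q1.append (sQ.append q2)).support := by
    intro y hy
    rw [Walk.mem_support_append_iff, Walk.mem_support_append_iff]
    tauto
  -- cross facts
  have HRP : ∀ y ∈ r.support, y ∈ (p1.append (sP.append p2)).support → y = rx := by
    intro y hy hyP
    by_contra hne
    rcases eq_or_ne y ry with rfl | hne2
    · exact (hsegQ y hry hyP).elim hryx hryz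
    · exact (hint y hy hne hne2).1 hyP
  have HRQ : ∀ y ∈ r.support, y ∈ (q1.append (sQ.append q2)).support → y = ry := by
    intro y hy hyQ
    by_contra hne2
    rcases eq_or_ne y rx with rfl | hne
    · exact (hsegP y hrx hyQ).elim hrxx hrxw
    · exact (hint y hy hne hne2).2 hyQ
  have hrx_notp1 : rx ∉ p1.support := fun h => hrxx (hFP rx h hrx)
  have hry_notq1 : ry ∉ q1.support := fun h => hryx (hFQ ry h hry)
  -- the new path P' = p1 + sQ1 + r.reverse + sP2 + p2
  have hA : ((sP.dropUntil rx hrx).append p2).IsPath :=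
    my_append hs2 hp2 (fun y h1 h2 => J2 y (hs2sub h1) h2)
  have hB : (r.reverse.append ((sP.dropUntil rx hrx).append p2)).IsPath := by
    refine my_append hr.reverse hA ?_
    intro y h1 h2
    rw [Walk.support_reverse, List.mem_reverse] at h1
    rw [Walk.mem_support_append_iff] at h2
    refine HRP y h1 (hmemP y ?_)
    rcases h2 with h2 | h2
    · exact Or.inr (Or.inl (hs2sub h2))
    · exact Or.inr (Or.inr h2)
  have hC : ((sQ.takeUntil ry hry).append
      (r.reverse.append ((sP.dropUntil rx hrx).append p2))).IsPath := by
    refine my_append ht1 hB ?_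
    intro y h1 h2
    rw [Walk.mem_support_append_iff, Walk.mem_support_append_iff,
      Walk.support_reverse, List.mem_reverse] at h2
    rcases h2 with h2 | h2 | h2
    · exact HRQ y h2 (hmemQ y (Or.inr (Or.inl (ht1sub h1))))
    · rcases hsegQ y (ht1sub h1) (hmemP y (Or.inr (Or.inl (hs2sub h2)))) with rfl | rfl
      · exact absurd h2 hx_s2
      · exact absurd h1 hz_t1
    · rcases hsegQ y (ht1sub h1) (hmemP y (Or.inr (Or.inr h2))) with rfl | rfl
      · exact absurd h2 hx_p2
      · exact absurd h1 hz_t1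
  have hP'path : (p1.append ((sQ.takeUntil ry hry).append
      (r.reverse.append ((sP.dropUntil rx hrx).append p2)))).IsPath := by
    refine my_append hp1 hC ?_
    intro y h1 h2
    rw [Walk.mem_support_append_iff, Walk.mem_support_append_iff,
      Walk.mem_support_append_iff, Walk.support_reverse, List.mem_reverse] at h2
    rcases h2 with h2 | h2 | h2 | h2
    · rcases hsegQ y (ht1sub h2) (hmemP y (Or.inl h1)) with rfl | rfl
      · rfl
      · exact absurd h2 hz_t1
    · have : y = rx := HRP y h2 (hmemP y (Or.inl h1))
      subst this
      exact absurd h1 hrx_notp1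
    · exact hFP y h1 (hs2sub h2)
    · exact absurd h2 (fun h2 => hFP3 y h1 h2)
  -- the new path Q' = q1 + sP1 + r + sQ2 + q2
  have hA' : ((sQ.dropUntil ry hry).append q2).IsPath :=
    my_append ht2 hq2 (fun y h1 h2 => K2 y (ht2sub h1) h2)
  have hB' : (r.append ((sQ.dropUntil ry hry).append q2)).IsPath := by
    refine my_append hr hA' ?_
    intro y h1 h2
    rw [Walk.mem_support_append_iff] at h2
    refine HRQ y h1 (hmemQ y ?_)
    rcases h2 with h2 | h2
    · exact Or.inr (Or.inl (ht2sub h2))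
    · exact Or.inr (Or.inr h2)
  have hC' : ((sP.takeUntil rx hrx).append
      (r.append ((sQ.dropUntil ry hry).append q2))).IsPath := by
    refine my_append hs1 hB' ?_
    intro y h1 h2
    rw [Walk.mem_support_append_iff, Walk.mem_support_append_iff] at h2
    rcases h2 with h2 | h2 | h2
    · exact HRP y h2 (hmemP y (Or.inr (Or.inl (hs1sub h1))))
    · rcases hsegP y (hs1sub h1) (hmemQ y (Or.inr (Or.inl (ht2sub h2)))) with rfl | rfl
      · exact absurd h2 hx_t2
      · exact absurd h1 hw_s1
    · rcases hsegP y (hs1sub h1) (hmemQ y (Or.inr (Or.inr h2))) with rfl | rfl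
      · exact absurd h2 hx_q2
      · exact absurd h1 hw_s1
  have hQ'path : (q1.append ((sP.takeUntil rx hrx).append
      (r.append ((sQ.dropUntil ry hry).append q2)))).IsPath := by
    refine my_append hq1 hC' ?_
    intro y h1 h2
    rw [Walk.mem_support_append_iff, Walk.mem_support_append_iff,
      Walk.mem_support_append_iff] at h2
    rcases h2 with h2 | h2 | h2 | h2
    · rcases hsegP y (hs1sub h2) (hmemQ y (Or.inl h1)) with rfl | rfl
      · rfl
      · exact absurd h2 hw_s1
    · have : y = ry := HRQ y h2 (hmemQ y (Or.inl h1))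
      subst this
      exact absurd h1 hry_notq1
    · exact hFQ y h1 (ht2sub h2)
    · exact absurd h2 (fun h2 => hFQ3 y h1 h2)
  -- lengths
  have l1 := hp.2 _ hP'path
  have l2 := hq.2 _ hQ'path
  have l3 := hp.2 _ hq.1
  have l4 := hq.2 _ hp.1
  simp only [Walk.length_append, Walk.length_reverse] at l1 l2 l3 l4
  have hsl : (sP.takeUntil rx hrx).length + (sP.dropUntil rx hrx).length = sP.length := by
    have h := congrArg Walk.length (Walk.take_spec sP hrx)
    rwa [Walk.length_append] at h
  have htl : (sQ.takeUntil ry hry).length + (sQ.dropUntil ry hry).length = sQ.length := by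
    have h := congrArg Walk.length (Walk.take_spec sQ hry)
    rwa [Walk.length_append] at h
  have hrne : rx ≠ ry := by
    rintro rfl
    exact (hsegP rx hrx (hmemQ rx (Or.inr (Or.inl hry)))).elim hrxx hrxw
  have hrlen : 0 < r.length := by
    cases r with
    | nil => exact absurd rfl hrne
    | cons h q => simp
  omega
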